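/- Let G be an ADMG over nodes V, A and C disjoint node sets m-separated by B, and let G' be the subgraph of G induced on V \ {λ} for some λ ∈ B. Then A and C are m-separated by B \ {λ} in G'. -/

import Mathlib

/-- The kind of a step along a path in a mixed graph: a forward directed edge,
a backward directed edge, or a bi-directed edge. -/
inductive StepKind : Type
  | fwd | bwd | bidir

/-- Whether a step has an arrowhead at its left endpoint. -/
def StepKind.headLeft : StepKind → Prop
  | .fwd => False
  | _ => True

/-- Whether a step has an arrowhead at its right endpoint. -/
def StepKind.headRight : StepKind → Prop
  | .bwd => False
  | _ => True

/-- A directed mixed graph: directed edges `dir` and bi-directed edges `bi`. -/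
structure MixedGraph (V : Type*) where
  dir : V → V → Prop
  bi : V → V → Prop

namespace MixedGraph

variable {V : Type*}

/-- Validity of a step of the given kind between `u` (left) and `v` (right). -/
def stepOK (G : MixedGraph V) (u v : V) : StepKind → Prop
  | .fwd => G.dir u v
  | .bwd => G.dir v u
  | .bidir => G.bi u v

/-- A path in a mixed graph: distinct vertices `verts 0, …, verts n` joined by
edges of the recorded kinds. -/
structure Path (G : MixedGraph V) where
  n : ℕ
  verts : Fin (n + 1) → V
  steps : Fin n → StepKind
  inj : Function.Injective verts
  ok : ∀ i : Fin n, G.stepOK (verts i.castSucc) (verts i.succ) (steps i)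

/-- A mixed graph is acyclic if there is no nontrivial directed cycle. -/
def Acyclic (G : MixedGraph V) : Prop := ∀ v, ¬ Relation.TransGen G.dir v v

/-- `v` is a descendant of `u` (every node is its own descendant). -/
def descends (G : MixedGraph V) (u v : V) : Prop := Relation.ReflTransGen G.dir u v

/-- Ancestors of a set of nodes (via directed edges; each node is its own ancestor). -/
def ancestorsOf (G : MixedGraph V) (S : Set V) : Set V :=
  {u | ∃ s ∈ S, Relation.ReflTransGen G.dir u s}

/-- The interior vertex `verts j` (for `0 < j < n+1`, i.e. `j` regarded in `Fin n`
with `0 < j`) is a collider on the path: both adjacent edges have an arrowhead at it. -/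
def IsCollider (G : MixedGraph V) (p : Path G) (j : Fin p.n) (_hj : 0 < j.val) : Prop :=
  (p.steps ⟨j.val - 1, lt_of_le_of_lt (Nat.sub_le _ _) j.isLt⟩).headRight ∧
    (p.steps j).headLeft

/-- A path is blocked by `B` if some interior non-collider lies in `B`, or some
interior collider has no descendant in `B`. -/
def Blocked (G : MixedGraph V) (p : Path G) (B : Set V) : Prop :=
  ∃ (j : Fin p.n) (hj : 0 < j.val),
    (¬ G.IsCollider p j hj ∧ p.verts j.castSucc ∈ B) ∨
      (G.IsCollider p j hj ∧ ∀ w ∈ B, ¬ G.descends (p.verts j.castSucc) w)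

/-- m-separation (d-separation when there are no bi-directed edges): every path
from `A` to `C` is blocked by `B`. -/
def MSep (G : MixedGraph V) (A C B : Set V) : Prop :=
  ∀ p : Path G, p.verts 0 ∈ A → p.verts (Fin.last p.n) ∈ C → G.Blocked p B

/-- Subgraph induced on a set `W` of vertices. -/
def restrict (G : MixedGraph V) (W : Set V) : MixedGraph V where
  dir u v := G.dir u v ∧ u ∈ W ∧ v ∈ W
  bi u v := G.bi u v ∧ u ∈ W ∧ v ∈ W

/-- Two distinct nodes are collider-connected if some path between them has all
interior nodes colliders (adjacent nodes are collider-connected). This is the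
adjacency of the augmented graph. -/
def collConn (G : MixedGraph V) (u v : V) : Prop :=
  u ≠ v ∧ ∃ p : Path G, p.verts 0 = u ∧ p.verts (Fin.last p.n) = v ∧
    ∀ (j : Fin p.n) (hj : 0 < j.val), G.IsCollider p j hj

end MixedGraph

/-- Separation in an undirected graph with adjacency `adj`: there is no walk from
`A` to `C` avoiding `B`. -/
def USep {V : Type*} (adj : V → V → Prop) (A C B : Set V) : Prop :=
  ∀ a ∈ A, ∀ c ∈ C,
    ¬ Relation.ReflTransGen (fun u v => adj u v ∧ u ∉ B ∧ v ∉ B) a c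

/-- removing a node `λ` of the conditioning set from the graph
preserves m-separation with conditioning set `B \ {λ}`. -/
theorem stmt19 {V : Type*} (G : MixedGraph V) (hacyc : G.Acyclic)
    (A B C : Set V)
    (hAB : Disjoint A B) (hAC : Disjoint A C) (hBC : Disjoint B C)
    (hsep : G.MSep A C B)
    (lam : V) (hlam : lam ∈ B) :
    (G.restrict {lam}ᶜ).MSep A C (B \ {lam}) := by
  intro p hA hC
  have hok : ∀ i : Fin p.n, G.stepOK (p.verts i.castSucc) (p.verts i.succ) (p.steps i) := by
    intro i
    have h := p.ok i
    cases hs : p.steps i <;>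
      simp only [MixedGraph.stepOK, MixedGraph.restrict, hs] at h ⊢ <;> exact h.1
  have hleft : ∀ i : Fin p.n, p.verts i.castSucc ≠ lam := by
    intro i
    have h := p.ok i
    cases hs : p.steps i <;> rw [hs] at h <;>
      simp only [MixedGraph.stepOK, MixedGraph.restrict, Set.mem_compl_iff,
        Set.mem_singleton_iff] at h <;> tauto
  let p' : MixedGraph.Path G := ⟨p.n, p.verts, p.steps, p.inj, hok⟩
  obtain ⟨j, hj, hcase⟩ := hsep p' hA hC
  refine ⟨j, hj, ?_⟩
  rcases hcase with ⟨hnc, hmem⟩ | ⟨hc, hdesc⟩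
  · exact Or.inl ⟨hnc, hmem, hleft j⟩
  · refine Or.inr ⟨hc, ?_⟩
    intro w hw hd
    exact hdesc w hw.1 (Relation.ReflTransGen.mono (r := (G.restrict {lam}ᶜ).dir) (p := G.dir) (fun u v h => h.1) _ _ hd)
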